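/- Let I be a nonempty index set and, for each η ∈ I, let f_η : ℝ^{d×N} → ℝ be a strong Morrey quasiconvex function. Suppose the pointwise supremum f̂ := sup_{η∈I} f_η is real-valued and Borel measurable. Then f̂ is strong Morrey quasiconvex. -/

import Mathlib

open Filter Topology

variable {X : Type*}

/-- A function into the extended reals is level convex if along segments its value
is at most the maximum of the values at the endpoints. -/
def LevelConvex [AddCommGroup X] [Module ℝ X] (F : X → EReal) : Prop :=
  ∀ x y : X, ∀ t : ℝ, 0 < t → t < 1 →
    F (t • x + (1 - t) • y) ≤ max (F x) (F y)

/-- The lower semicontinuous envelope `Γ_τ(F)`: the pointwise supremum of all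
lower semicontinuous functions below `F`. -/
noncomputable def lscEnv [TopologicalSpace X] (F : X → EReal) : X → EReal :=
  fun x => ⨆ G : {G : X → EReal // LowerSemicontinuous G ∧ G ≤ F}, (G : X → EReal) x

/-- The level convex envelope `F^{lc}`: the pointwise supremum of all level convex
functions below `F`. -/
noncomputable def lcEnv [AddCommGroup X] [Module ℝ X] (F : X → EReal) : X → EReal :=
  fun x => ⨆ G : {G : X → EReal // LevelConvex G ∧ G ≤ F}, (G : X → EReal) x

/-- The lower semicontinuous level convex envelope `F^{lslc}`: the pointwise supremum
of all functions below `F` which are both lower semicontinuous and level convex. -/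
noncomputable def lslcEnv [TopologicalSpace X] [AddCommGroup X] [Module ℝ X]
    (F : X → EReal) : X → EReal :=
  fun x => ⨆ G : {G : X → EReal // LowerSemicontinuous G ∧ LevelConvex G ∧ G ≤ F},
    (G : X → EReal) x

open MeasureTheory

/-- The space `ℝ^{d×N}` of `d×N` real matrices, identified with (continuous) linear maps
from `ℝ^N` to `ℝ^d`. -/
abbrev Mat (d N : ℕ) := EuclideanSpace ℝ (Fin N) →L[ℝ] EuclideanSpace ℝ (Fin d)

noncomputable instance (d N : ℕ) : MeasurableSpace (Mat d N) := borel _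
instance (d N : ℕ) : BorelSpace (Mat d N) := ⟨rfl⟩

/-- The open unit cube `Q = (0,1)^N` in `ℝ^N`. -/
def unitCube (N : ℕ) : Set (EuclideanSpace ℝ (Fin N)) :=
  {x | ∀ i, x i ∈ Set.Ioo (0 : ℝ) 1}

/-- `h` is strong Morrey quasiconvex: for all `ε > 0`, `ξ` and `K > 0` there is `δ > 0`
such that any Lipschitz `φ` with `‖Dφ‖ ≤ K` a.e. on the unit cube `Q` and `‖φ‖ ≤ δ` on
`∂Q` satisfies `h(ξ) ≤ ess sup_{x ∈ Q} h(ξ + Dφ(x)) + ε`. -/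
def StrongMorreyQuasiconvex {d N : ℕ} (h : Mat d N → EReal) : Prop :=
  ∀ ε : ℝ, 0 < ε → ∀ ξ : Mat d N, ∀ K : ℝ, 0 < K →
    ∃ δ : ℝ, 0 < δ ∧
      ∀ φ : EuclideanSpace ℝ (Fin N) → EuclideanSpace ℝ (Fin d),
        (∃ L : NNReal, LipschitzWith L φ) →
        (∀ᵐ x ∂(volume.restrict (unitCube N)), ‖fderiv ℝ φ x‖ ≤ K) →
        (∀ x ∈ frontier (unitCube N), ‖φ x‖ ≤ δ) →
        h ξ ≤ essSup (fun x => h (ξ + fderiv ℝ φ x)) (volume.restrict (unitCube N)) +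
          ((ε : ℝ) : EReal)

/-- a pointwise supremum of strong Morrey quasiconvex functions which is
real-valued (i.e. pointwise bounded above) and Borel measurable is strong Morrey
quasiconvex. -/
theorem stmt14 {d N : ℕ} {I : Type*} [Nonempty I] (f : I → Mat d N → ℝ)
    (hmeas : ∀ η, Measurable (f η))
    (hsmq : ∀ η, StrongMorreyQuasiconvex (fun ξ => ((f η ξ : ℝ) : EReal)))
    (hbdd : ∀ ξ, BddAbove (Set.range fun η => f η ξ))
    (hmeas_sup : Measurable fun ξ => ⨆ η, f η ξ) :
    StrongMorreyQuasiconvex (fun ξ => (((⨆ η, f η ξ : ℝ)) : EReal)) := by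
  intro ε hε ξ K hK
  -- choose η close to the sup at ξ
  have hlt : (⨆ η, f η ξ) - ε / 2 < ⨆ η, f η ξ := by linarith
  obtain ⟨η, hη⟩ := exists_lt_of_lt_ciSup hlt
  obtain ⟨δ, hδ, hδ'⟩ := hsmq η (ε / 2) (by linarith) ξ K hK
  refine ⟨δ, hδ, fun φ hlip hder hbd => ?_⟩
  have h1 := hδ' φ hlip hder hbd
  have hmono : essSup (fun x => ((f η (ξ + fderiv ℝ φ x) : ℝ) : EReal))
        (volume.restrict (unitCube N))
      ≤ essSup (fun x => (((⨆ η, f η (ξ + fderiv ℝ φ x) : ℝ)) : EReal))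
        (volume.restrict (unitCube N)) := by
    refine essSup_mono_ae (Filter.Eventually.of_forall fun x => ?_)
    exact EReal.coe_le_coe_iff.2 (le_ciSup (hbdd _) η)
  have h2 : (((⨆ η, f η ξ : ℝ)) : EReal)
      ≤ ((f η ξ : ℝ) : EReal) + ((ε / 2 : ℝ) : EReal) := by
    rw [← EReal.coe_add]
    exact EReal.coe_le_coe_iff.2 (by linarith)
  calc (((⨆ η, f η ξ : ℝ)) : EReal)
      ≤ ((f η ξ : ℝ) : EReal) + ((ε / 2 : ℝ) : EReal) := h2
    _ ≤ (essSup (fun x => ((f η (ξ + fderiv ℝ φ x) : ℝ) : EReal))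
          (volume.restrict (unitCube N)) + ((ε / 2 : ℝ) : EReal))
        + ((ε / 2 : ℝ) : EReal) := add_le_add_left h1 _
    _ ≤ (essSup (fun x => (((⨆ η, f η (ξ + fderiv ℝ φ x) : ℝ)) : EReal))
          (volume.restrict (unitCube N)) + ((ε / 2 : ℝ) : EReal))
        + ((ε / 2 : ℝ) : EReal) := by
          exact add_le_add_left (add_le_add_left hmono _) _
    _ = essSup (fun x => (((⨆ η, f η (ξ + fderiv ℝ φ x) : ℝ)) : EReal))
          (volume.restrict (unitCube N)) + ((ε : ℝ) : EReal) := by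
          rw [add_assoc, ← EReal.coe_add, add_halves]
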